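/- Let G ≤ Π_n be any symmetry group. Then exactly one of the following alternatives holds: either the set of A ∈ 𝒜(G) for which Aut_aff(A) ≠ aff(Aut(A)) has μ_G-measure zero (affine exactness holds for almost every A ∈ 𝒜(G)), or Aut_aff(A) ≠ aff(Aut(A)) for every A ∈ 𝒜(G) (affine exactness fails for all A ∈ 𝒜(G)). -/

import Mathlib

/- Setting: graphs are symmetric real n×n matrices. `pm n σ` is the permutation
matrix of `σ` (entry (i,j) equals 1 iff σ j = i, so it "sends j to σ j").
`DS n` is the set of doubly stochastic matrices, `Aut A` the set of permutation
matrices commuting with `A`, `AutConv A` its doubly stochastic relaxation.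
`Vset G`, `AcalA G` and `muG G` are V(G), 𝒜(G) and the Hausdorff measure μ_G
(of dimension d = dim V(G), w.r.t. the Frobenius/Euclidean norm) restricted to V(G). -/

open Matrix MeasureTheory Finset

noncomputable section

def pm (n : ℕ) (σ : Equiv.Perm (Fin n)) : Matrix (Fin n) (Fin n) ℝ :=
  Matrix.of fun i j => if σ j = i then (1 : ℝ) else 0

def IsPermMatrix {n : ℕ} (P : Matrix (Fin n) (Fin n) ℝ) : Prop :=
  ∃ σ : Equiv.Perm (Fin n), P = pm n σ

def DS (n : ℕ) : Set (Matrix (Fin n) (Fin n) ℝ) :=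
  {S | (∀ i j, 0 ≤ S i j) ∧ (∀ i, ∑ j, S i j = 1) ∧ (∀ j, ∑ i, S i j = 1)}

def Aut {n : ℕ} (A : Matrix (Fin n) (Fin n) ℝ) : Set (Matrix (Fin n) (Fin n) ℝ) :=
  {P | IsPermMatrix P ∧ A * P = P * A}

def AutConv {n : ℕ} (A : Matrix (Fin n) (Fin n) ℝ) : Set (Matrix (Fin n) (Fin n) ℝ) :=
  {S | S ∈ DS n ∧ A * S = S * A}

/-- `DS(A)` is convex exact: the doubly stochastic commutants of `A` are exactly the
convex combinations of the permutation matrices commuting with `A`. -/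
def ConvexExact {n : ℕ} (A : Matrix (Fin n) (Fin n) ℝ) : Prop :=
  AutConv A = convexHull ℝ (Aut A)

/-- The subgroup `G` of permutations, realized as a set of permutation matrices. -/
def matSet {n : ℕ} (G : Subgroup (Equiv.Perm (Fin n))) : Set (Matrix (Fin n) (Fin n) ℝ) :=
  (pm n) '' (G : Set (Equiv.Perm (Fin n)))

/-- `V(G)`: symmetric matrices invariant under conjugation by all elements of `G`. -/
def Vset {n : ℕ} (G : Subgroup (Equiv.Perm (Fin n))) : Set (Matrix (Fin n) (Fin n) ℝ) :=
  {A | A.IsSymm ∧ ∀ σ ∈ G, (pm n σ)ᵀ * A * pm n σ = A}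

/-- `𝒜(G)`: symmetric matrices whose automorphism group is exactly `G`. -/
def AcalA {n : ℕ} (G : Subgroup (Equiv.Perm (Fin n))) : Set (Matrix (Fin n) (Fin n) ℝ) :=
  {A | A.IsSymm ∧ Aut A = matSet G}

attribute [local instance] Matrix.frobeniusNormedAddCommGroup

instance matMeasurableSpace {m k : Type*} [Fintype m] [Fintype k] :
    MeasurableSpace (Matrix m k ℝ) := borel _

instance matBorelSpace {m k : Type*} [Fintype m] [Fintype k] :
    BorelSpace (Matrix m k ℝ) := ⟨rfl⟩

/-- `μ_G`: the `dim V(G)`-dimensional Hausdorff measure restricted to `V(G)`. -/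
def muG {n : ℕ} (G : Subgroup (Equiv.Perm (Fin n))) : Measure (Matrix (Fin n) (Fin n) ℝ) :=
  (@Measure.hausdorffMeasure _ _ _ matBorelSpace
    (Module.finrank ℝ ↥(Submodule.span ℝ (Vset G)) : ℝ)).restrict (Vset G)

/-- `N(𝒢)`: matrices supported on the union of the supports of the matrices in `𝒢`. -/
def Nset {n : ℕ} (𝒢 : Set (Matrix (Fin n) (Fin n) ℝ)) : Set (Matrix (Fin n) (Fin n) ℝ) :=
  {T | ∀ i j, (∀ P ∈ 𝒢, P i j = 0) → T i j = 0}

/-- The affine automorphisms of `A`: matrices with row and column sums one, supported in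
`N(Aut A)`, and commuting with `A`. -/
def AutAff {n : ℕ} (A : Matrix (Fin n) (Fin n) ℝ) : Set (Matrix (Fin n) (Fin n) ℝ) :=
  {S | S *ᵥ 1 = 1 ∧ (1 : Fin n → ℝ) ᵥ* S = 1 ∧ S ∈ Nset (Aut A) ∧ A * S = S * A}

/-- Affine exactness at `A`: the affine automorphisms are exactly the affine hull of
the automorphisms. -/
def AffineExact {n : ℕ} (A : Matrix (Fin n) (Fin n) ℝ) : Prop :=
  AutAff A = (affineSpan ℝ (Aut A) : Set (Matrix (Fin n) (Fin n) ℝ))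

/-! ### Auxiliary material for the proof -/

instance matBorelSpaceFin {n : ℕ} : @BorelSpace (Matrix (Fin n) (Fin n) ℝ)
    (@UniformSpace.toTopologicalSpace _ (@PseudoEMetricSpace.toUniformSpace _
      (@EMetricSpace.toPseudoEMetricSpace _ inferInstance))) _ := matBorelSpace

open MeasureTheory

section PolyNull

/-- The zero set of a nonzero multivariate polynomial over `ℝ` is Lebesgue-null. -/
theorem measure_eval_zero : ∀ {d : ℕ} (p : MvPolynomial (Fin d) ℝ), p ≠ 0 →
    volume {x : Fin d → ℝ | MvPolynomial.eval x p = 0} = 0 := by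
  intro d
  induction d with
  | zero =>
    intro p hp
    obtain ⟨c, rfl⟩ := MvPolynomial.C_surjective (Fin 0) p
    have hc : c ≠ 0 := fun h => hp (by simp [h])
    have h0 : {x : Fin 0 → ℝ | MvPolynomial.eval x (MvPolynomial.C c) = 0} = ∅ := by
      ext x; simp [hc]
    rw [h0]; exact measure_empty
  | succ d ih =>
    intro p hp
    set q : Polynomial (MvPolynomial (Fin d) ℝ) := MvPolynomial.finSuccEquiv ℝ d p with hqdef
    have hq : q ≠ 0 := by
      simpa [hqdef] using (map_ne_zero_iff _ (MvPolynomial.finSuccEquiv ℝ d).injective).2 hp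
    have hk0 : q.coeff q.natDegree ≠ 0 := by
      rw [← Polynomial.leadingCoeff]
      exact Polynomial.leadingCoeff_ne_zero.2 hq
    set k0 := q.natDegree with hk0def
    -- the section evaluation function and its continuity
    set f : (Fin d → ℝ) × ℝ → ℝ :=
      fun z => Polynomial.eval z.2 (q.map (MvPolynomial.eval z.1)) with hfdef
    have hfeq : ∀ z : (Fin d → ℝ) × ℝ,
        f z = ∑ i ∈ Finset.range (q.natDegree + 1),
          MvPolynomial.eval z.1 (q.coeff i) * z.2 ^ i := by
      intro z
      show Polynomial.eval z.2 (q.map (MvPolynomial.eval z.1)) = _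
      rw [Polynomial.eval_eq_sum_range' (Nat.lt_succ_of_le Polynomial.natDegree_map_le)]
      simp [Polynomial.coeff_map]
    have hfc : Continuous f := by
      rw [show f = fun z : (Fin d → ℝ) × ℝ => ∑ i ∈ Finset.range (q.natDegree + 1),
          MvPolynomial.eval z.1 (q.coeff i) * z.2 ^ i from funext hfeq]
      exact continuous_finset_sum _ fun i _ =>
        ((MvPolynomial.continuous_eval (q.coeff i)).comp continuous_fst).mul (continuous_snd.pow i)
    set T : Set ((Fin d → ℝ) × ℝ) := {z | f z = 0} with hTdef
    have hTm : MeasurableSet T := hfc.measurable (measurableSet_singleton (0 : ℝ))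
    have hT : (volume.prod volume) T = 0 := by
      rw [Measure.measure_prod_null hTm]
      have hN := ih (q.coeff k0) hk0
      filter_upwards [measure_eq_zero_iff_ae_notMem.mp hN] with s hs
      have hmapne : q.map (MvPolynomial.eval s) ≠ 0 := by
        intro hz
        apply hs
        have := congrArg (fun r => Polynomial.coeff r k0) hz
        simpa [Polynomial.coeff_map] using this
      have hfin : {y : ℝ | Polynomial.eval y (q.map (MvPolynomial.eval s)) = 0}.Finite :=
        Polynomial.finite_setOf_isRoot hmapne
      have : Prod.mk s ⁻¹' T = {y : ℝ | Polynomial.eval y (q.map (MvPolynomial.eval s)) = 0} := rfl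
      rw [this]
      exact hfin.measure_zero _
    -- transfer along the measurable equivalence
    have hmp : MeasurePreserving
        (fun x : Fin (d+1) → ℝ =>
          Prod.swap ((MeasurableEquiv.piFinSuccAbove (fun _ : Fin (d+1) => ℝ) 0) x))
        volume (volume.prod volume) := by
      have h1 := volume_preserving_piFinSuccAbove (fun _ : Fin (d+1) => ℝ) 0
      have h2 : MeasurePreserving (Prod.swap : ℝ × (Fin d → ℝ) → (Fin d → ℝ) × ℝ)
          volume (volume.prod volume) := by
        rw [Measure.volume_eq_prod]
        exact Measure.measurePreserving_swap
      exact h2.comp (by rw [Measure.volume_eq_prod] at h1 ⊢; exact h1)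
    have hpre : {x : Fin (d+1) → ℝ | MvPolynomial.eval x p = 0} =
        (fun x : Fin (d+1) → ℝ =>
          Prod.swap ((MeasurableEquiv.piFinSuccAbove (fun _ : Fin (d+1) => ℝ) 0) x)) ⁻¹' T := by
      ext x
      have hx : (MeasurableEquiv.piFinSuccAbove (fun _ : Fin (d+1) => ℝ) 0) x
          = (x 0, Fin.removeNth 0 x) := rfl
      simp only [Set.mem_setOf_eq, Set.mem_preimage, hx, Prod.swap_prod_mk, hTdef, hfdef]
      rw [Fin.removeNth_zero]
      rw [show MvPolynomial.eval x p
          = MvPolynomial.eval (Fin.cons (x 0) (Fin.tail x)) p by rw [Fin.cons_self_tail]]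
      rw [MvPolynomial.eval_eq_eval_mv_eval' (Fin.tail x) (x 0) p, hqdef]
    rw [hpre, hmp.measure_preimage hTm.nullMeasurableSet]
    exact hT

/-- Functions given by evaluation of a multivariate polynomial. -/
def IsPolyFun {d : ℕ} (f : (Fin d → ℝ) → ℝ) : Prop :=
  ∃ p : MvPolynomial (Fin d) ℝ, ∀ x, f x = MvPolynomial.eval x p

theorem IsPolyFun.const {d : ℕ} (c : ℝ) : IsPolyFun (fun _ : Fin d → ℝ => c) :=
  ⟨MvPolynomial.C c, by simp⟩

theorem IsPolyFun.add {d : ℕ} {f g : (Fin d → ℝ) → ℝ} (hf : IsPolyFun f) (hg : IsPolyFun g) :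
    IsPolyFun (fun x => f x + g x) := by
  obtain ⟨p, hp⟩ := hf; obtain ⟨q, hq⟩ := hg
  exact ⟨p + q, fun x => by simp [hp, hq]⟩

theorem IsPolyFun.mul {d : ℕ} {f g : (Fin d → ℝ) → ℝ} (hf : IsPolyFun f) (hg : IsPolyFun g) :
    IsPolyFun (fun x => f x * g x) := by
  obtain ⟨p, hp⟩ := hf; obtain ⟨q, hq⟩ := hg
  exact ⟨p * q, fun x => by simp [hp, hq]⟩

theorem IsPolyFun.finset_sum {d : ℕ} {ι : Type*} (s : Finset ι) (f : ι → (Fin d → ℝ) → ℝ)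
    (h : ∀ i ∈ s, IsPolyFun (f i)) : IsPolyFun (fun x => ∑ i ∈ s, f i x) := by
  classical
  induction s using Finset.induction with
  | empty => simpa using IsPolyFun.const (d := d) 0
  | @insert a s ha ih =>
    have h1 : IsPolyFun (fun x => f a x + ∑ i ∈ s, f i x) :=
      (h a (Finset.mem_insert_self _ _)).add (ih fun i hi => h i (Finset.mem_insert_of_mem hi))
    simpa [Finset.sum_insert ha] using h1

theorem IsPolyFun.finset_prod {d : ℕ} {ι : Type*} (s : Finset ι) (f : ι → (Fin d → ℝ) → ℝ)
    (h : ∀ i ∈ s, IsPolyFun (f i)) : IsPolyFun (fun x => ∏ i ∈ s, f i x) := by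
  classical
  induction s using Finset.induction with
  | empty => simpa using IsPolyFun.const (d := d) 1
  | @insert a s ha ih =>
    have h1 : IsPolyFun (fun x => f a x * ∏ i ∈ s, f i x) :=
      (h a (Finset.mem_insert_self _ _)).mul (ih fun i hi => h i (Finset.mem_insert_of_mem hi))
    simpa [Finset.prod_insert ha] using h1

theorem IsPolyFun.linear {d : ℕ} (ℓ : (Fin d → ℝ) →ₗ[ℝ] ℝ) : IsPolyFun (fun x => ℓ x) := by
  have h : ∀ x : Fin d → ℝ, ℓ x = ∑ i, x i * ℓ (fun j => if i = j then 1 else 0) := by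
    intro x
    rw [LinearMap.pi_apply_eq_sum_univ ℓ x]
    simp [smul_eq_mul]
  rw [show (fun x => ℓ x) = fun x => ∑ i, x i * ℓ (fun j => if i = j then 1 else 0)
    from funext h]
  exact IsPolyFun.finset_sum _ _ fun i _ =>
    IsPolyFun.mul ⟨MvPolynomial.X i, by simp⟩ (IsPolyFun.const _)

theorem IsPolyFun.det {d m : ℕ} (B : (Fin d → ℝ) → Matrix (Fin m) (Fin m) ℝ)
    (hB : ∀ i j, IsPolyFun fun x => B x i j) : IsPolyFun fun x => (B x).det := by
  have h : ∀ x, (B x).det = ∑ σ : Equiv.Perm (Fin m),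
      ((Equiv.Perm.sign σ : ℤ) : ℝ) * ∏ i, B x (σ i) i := by
    intro x
    rw [Matrix.det_apply]
    congr 1; funext σ
    rw [Units.smul_def, zsmul_eq_mul]
  rw [show (fun x => (B x).det) = fun x => ∑ σ : Equiv.Perm (Fin m),
      ((Equiv.Perm.sign σ : ℤ) : ℝ) * ∏ i, B x (σ i) i from funext h]
  exact IsPolyFun.finset_sum _ _ fun σ _ =>
    (IsPolyFun.const _).mul (IsPolyFun.finset_prod _ _ fun i _ => hB _ _)

theorem IsPolyFun.volume_zero {d : ℕ} {f : (Fin d → ℝ) → ℝ} (hf : IsPolyFun f)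
    {x₀ : Fin d → ℝ} (hx₀ : f x₀ ≠ 0) : volume {x | f x = 0} = 0 := by
  obtain ⟨p, hp⟩ := hf
  have hpne : p ≠ 0 := by
    intro h
    apply hx₀
    rw [hp, h, map_zero]
  have : {x | f x = 0} = {x | MvPolynomial.eval x p = 0} := by ext x; simp [hp]
  rw [this]
  exact measure_eval_zero p hpne

end PolyNull

section Stmt13Aux

attribute [local instance] Matrix.frobeniusNormedSpace

variable {n : ℕ} (G : Subgroup (Equiv.Perm (Fin n)))

/-! ### permutation matrix lemmas -/

theorem pm_one : pm n (1 : Equiv.Perm (Fin n)) = 1 := by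
  ext i j
  simp [pm, Matrix.one_apply, eq_comm]

theorem pm_mul (σ τ : Equiv.Perm (Fin n)) : pm n σ * pm n τ = pm n (σ * τ) := by
  ext i j
  rw [Matrix.mul_apply]
  rw [Finset.sum_eq_single (τ j)]
  · simp [pm, Equiv.Perm.mul_apply]; congr
  · intro k _ hk
    simp [pm, Ne.symm hk]
  · intro h; exact absurd (Finset.mem_univ _) h

theorem pm_transpose (σ : Equiv.Perm (Fin n)) : (pm n σ)ᵀ = pm n σ⁻¹ := by
  ext i j
  simp only [Matrix.transpose_apply, pm, Matrix.of_apply]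
  by_cases h : σ i = j
  · rw [if_pos h, if_pos (by rw [← h]; simp)]
  · rw [if_neg h, if_neg (by intro hc; apply h; rw [← hc]; simp)]

theorem pm_mulVec_one (σ : Equiv.Perm (Fin n)) : pm n σ *ᵥ (1 : Fin n → ℝ) = 1 := by
  ext i
  simp only [Matrix.mulVec, dotProduct, Pi.one_apply, mul_one, pm, Matrix.of_apply]
  rw [Finset.sum_eq_single (σ⁻¹ i)]
  · simp
  · intro k _ hk
    rw [if_neg]
    intro h; exact hk (by rw [← h]; simp)
  · intro h; exact absurd (Finset.mem_univ _) h

theorem pm_vecMul_one (σ : Equiv.Perm (Fin n)) : (1 : Fin n → ℝ) ᵥ* pm n σ = 1 := by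
  ext j
  simp only [Matrix.vecMul, dotProduct, Pi.one_apply, one_mul, pm, Matrix.of_apply]
  rw [Finset.sum_ite_eq]
  simp

theorem pm_inj : Function.Injective (pm n) := by
  intro σ τ h
  refine Equiv.ext fun j => ?_
  have h1 := congrFun (congrFun h (σ j)) j
  by_contra hc
  simp [pm, Ne.symm hc] at h1

theorem one_mem_matSet : (1 : Matrix (Fin n) (Fin n) ℝ) ∈ matSet G :=
  ⟨1, G.one_mem, pm_one⟩

theorem pm_mem_matSet_iff {σ : Equiv.Perm (Fin n)} : pm n σ ∈ matSet G ↔ σ ∈ G := by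
  constructor
  · rintro ⟨τ, hτ, hEq⟩; rwa [← pm_inj hEq]
  · intro h; exact ⟨σ, h, rfl⟩

/-! ### the subspace `V(G)` -/

def Vsub : Submodule ℝ (Matrix (Fin n) (Fin n) ℝ) where
  carrier := Vset G
  add_mem' := by
    rintro A B ⟨hA1, hA2⟩ ⟨hB1, hB2⟩
    refine ⟨?_, fun σ hσ => ?_⟩
    · show (A + B)ᵀ = A + B
      rw [Matrix.transpose_add, hA1, hB1]
    · rw [Matrix.mul_add, Matrix.add_mul, hA2 σ hσ, hB2 σ hσ]
  zero_mem' := ⟨by simp [Matrix.IsSymm], fun σ hσ => by simp⟩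
  smul_mem' := by
    rintro c A ⟨h1, h2⟩
    refine ⟨?_, fun σ hσ => ?_⟩
    · show (c • A)ᵀ = c • A
      rw [Matrix.transpose_smul, h1]
    · rw [Matrix.mul_smul, Matrix.smul_mul, h2 σ hσ]

instance VsubBorel : @BorelSpace ↥(Vsub G)
    (@UniformSpace.toTopologicalSpace _ (@PseudoEMetricSpace.toUniformSpace _
      (@EMetricSpace.toPseudoEMetricSpace _ inferInstance))) _ := Subtype.borelSpace _

theorem coe_Vsub : ((Vsub G : Submodule ℝ (Matrix (Fin n) (Fin n) ℝ)) : Set _) = Vset G := rfl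

theorem span_Vset : Submodule.span ℝ (Vset G) = Vsub G := by
  rw [← coe_Vsub]; exact Submodule.span_eq _

theorem measVset : MeasurableSet (Vset G) := by
  rw [← coe_Vsub]
  exact (Submodule.closed_of_finiteDimensional _).measurableSet

def dG : ℕ := Module.finrank ℝ ↥(Vsub G)

theorem muG_apply (s : Set (Matrix (Fin n) (Fin n) ℝ)) :
    muG G s = μH[(dG G : ℝ)] (s ∩ Vset G) := by
  have h : (Module.finrank ℝ ↥(Submodule.span ℝ (Vset G)) : ℝ) = (dG G : ℝ) := by
    rw [span_Vset]; rfl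
  rw [muG, h, Measure.restrict_apply' (measVset G)]

/-! ### the subspace `W`, the commutator map, and `K A` -/

def Wsub : Submodule ℝ (Matrix (Fin n) (Fin n) ℝ) where
  carrier := {T | T *ᵥ 1 = 0 ∧ (1 : Fin n → ℝ) ᵥ* T = 0 ∧
      ∀ i j, (∀ P ∈ matSet G, P i j = 0) → T i j = 0}
  add_mem' := by
    rintro A B ⟨a1, a2, a3⟩ ⟨b1, b2, b3⟩
    refine ⟨?_, ?_, fun i j h => ?_⟩
    · rw [Matrix.add_mulVec, a1, b1, add_zero]
    · rw [Matrix.vecMul_add, a2, b2, add_zero]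
    · rw [Matrix.add_apply, a3 i j h, b3 i j h, add_zero]
  zero_mem' := ⟨by simp, by simp, fun i j h => rfl⟩
  smul_mem' := by
    rintro c A ⟨a1, a2, a3⟩
    refine ⟨?_, ?_, fun i j h => ?_⟩
    · rw [Matrix.smul_mulVec, a1, smul_zero]
    · ext j
      have h := congrFun a2 j
      simp only [Matrix.vecMul, dotProduct, Pi.one_apply, one_mul, Matrix.smul_apply,
        smul_eq_mul, Pi.zero_apply] at h ⊢
      rw [← Finset.mul_sum, h, mul_zero]
    · rw [Matrix.smul_apply, a3 i j h, smul_zero]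

/-- The commutator `[A, ·]` as a bilinear map. -/
noncomputable def adB : Matrix (Fin n) (Fin n) ℝ →ₗ[ℝ]
    Matrix (Fin n) (Fin n) ℝ →ₗ[ℝ] Matrix (Fin n) (Fin n) ℝ :=
  LinearMap.mul ℝ _ - (LinearMap.mul ℝ _).flip

theorem adB_apply (A T : Matrix (Fin n) (Fin n) ℝ) : adB A T = A * T - T * A := rfl

/-- The direction space of `AutAff A` (translated to the origin). -/
noncomputable def Ksub (A : Matrix (Fin n) (Fin n) ℝ) : Submodule ℝ (Matrix (Fin n) (Fin n) ℝ) :=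
  Wsub G ⊓ LinearMap.ker (adB A)

theorem AcalA_subset_Vset : AcalA G ⊆ Vset G := by
  rintro A ⟨hsymm, hAut⟩
  refine ⟨hsymm, fun σ hσ => ?_⟩
  have hP : pm n σ ∈ Aut A := by rw [hAut]; exact ⟨σ, hσ, rfl⟩
  have hc : A * pm n σ = pm n σ * A := hP.2
  rw [pm_transpose, mul_assoc, hc, ← mul_assoc, pm_mul, inv_mul_cancel, pm_one, one_mul]

theorem matSet_subset_Aut {A : Matrix (Fin n) (Fin n) ℝ} (hA : A ∈ Vset G) :
    matSet G ⊆ Aut A := by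
  rintro P ⟨σ, hσ, rfl⟩
  refine ⟨⟨σ, rfl⟩, ?_⟩
  have h2 : pm n σ * ((pm n σ)ᵀ * A * pm n σ) = pm n σ * A := by rw [hA.2 σ hσ]
  rw [pm_transpose, ← mul_assoc, ← mul_assoc, pm_mul, mul_inv_cancel, pm_one, one_mul] at h2
  exact h2

theorem D0_le_Ksub {A : Matrix (Fin n) (Fin n) ℝ} (hA : A ∈ Vset G) :
    vectorSpan ℝ (matSet G) ≤ Ksub G A := by
  rw [vectorSpan_def, Submodule.span_le]
  rintro x ⟨P, hP, Q, hQ, rfl⟩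
  obtain ⟨σ, hσ, rfl⟩ := hP
  obtain ⟨τ, hτ, rfl⟩ := hQ
  have hPc := (matSet_subset_Aut G hA ⟨σ, hσ, rfl⟩).2
  have hQc := (matSet_subset_Aut G hA ⟨τ, hτ, rfl⟩).2
  simp only [vsub_eq_sub]
  refine Submodule.mem_inf.2 ⟨⟨?_, ?_, ?_⟩, ?_⟩
  · rw [Matrix.sub_mulVec, pm_mulVec_one, pm_mulVec_one, sub_self]
  · rw [Matrix.vecMul_sub, pm_vecMul_one, pm_vecMul_one, sub_self]
  · intro i j h
    rw [Matrix.sub_apply, h _ ⟨σ, hσ, rfl⟩, h _ ⟨τ, hτ, rfl⟩, sub_zero]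
  · rw [LinearMap.mem_ker, map_sub, adB_apply, adB_apply, hPc, hQc]
    abel

theorem autAff_eq {A : Matrix (Fin n) (Fin n) ℝ} (hA : A ∈ AcalA G) :
    AutAff A = {S | S - 1 ∈ Ksub G A} := by
  ext S
  simp only [AutAff, Set.mem_setOf_eq, Ksub, Submodule.mem_inf, LinearMap.mem_ker]
  constructor
  · rintro ⟨h1, h2, h3, h4⟩
    rw [hA.2] at h3
    refine ⟨⟨?_, ?_, ?_⟩, ?_⟩
    · rw [Matrix.sub_mulVec, h1, Matrix.one_mulVec, sub_self]
    · rw [Matrix.vecMul_sub, h2, Matrix.vecMul_one, sub_self]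
    · intro i j h
      rw [Matrix.sub_apply, h3 i j h, h _ (one_mem_matSet G), sub_zero]
    · rw [adB_apply, Matrix.mul_sub, Matrix.sub_mul, mul_one, one_mul, h4]
      abel
  · rintro ⟨⟨h1, h2, h3⟩, h4⟩
    rw [Matrix.sub_mulVec, Matrix.one_mulVec, sub_eq_zero] at h1
    rw [Matrix.vecMul_sub, Matrix.vecMul_one, sub_eq_zero] at h2
    refine ⟨h1, h2, ?_, ?_⟩
    · rw [hA.2]
      intro i j h
      have e1 := h3 i j h
      rw [Matrix.sub_apply, h _ (one_mem_matSet G), sub_zero] at e1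
      exact e1
    · rw [adB_apply, Matrix.mul_sub, Matrix.sub_mul, mul_one, one_mul] at h4
      exact sub_left_inj.1 (sub_eq_zero.1 h4)

theorem affSpan_eq {A : Matrix (Fin n) (Fin n) ℝ} (hA : A ∈ AcalA G) :
    (affineSpan ℝ (Aut A) : Set (Matrix (Fin n) (Fin n) ℝ))
      = {S | S - 1 ∈ vectorSpan ℝ (matSet G)} := by
  rw [hA.2]
  ext S
  have h1 : (1 : Matrix (Fin n) (Fin n) ℝ) ∈ affineSpan ℝ (matSet G) :=
    mem_affineSpan ℝ (one_mem_matSet G)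
  simp only [SetLike.mem_coe, Set.mem_setOf_eq]
  constructor
  · intro hS
    have h2 := (AffineSubspace.vsub_right_mem_direction_iff_mem h1 S).2 hS
    rwa [direction_affineSpan, vsub_eq_sub] at h2
  · intro hS
    have h2 : S -ᵥ 1 ∈ (affineSpan ℝ (matSet G)).direction := by
      rwa [direction_affineSpan, vsub_eq_sub]
    exact (AffineSubspace.vsub_right_mem_direction_iff_mem h1 S).1 h2

theorem exact_iff {A : Matrix (Fin n) (Fin n) ℝ} (hA : A ∈ AcalA G) :
    AffineExact A ↔ Ksub G A = vectorSpan ℝ (matSet G) := by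
  unfold AffineExact
  rw [autAff_eq G hA, affSpan_eq G hA]
  constructor
  · intro h
    ext T
    have h2 := Set.ext_iff.1 h (T + 1)
    simpa using h2
  · intro h; rw [h]

/-- The set of matrices commuting with `pm n σ`, as a submodule. -/
noncomputable def Csub (σ : Equiv.Perm (Fin n)) : Submodule ℝ (Matrix (Fin n) (Fin n) ℝ) :=
  LinearMap.ker (adB.flip (pm n σ))

theorem mem_Csub {σ : Equiv.Perm (Fin n)} {A : Matrix (Fin n) (Fin n) ℝ} :
    A ∈ Csub σ ↔ A * pm n σ = pm n σ * A := by
  rw [Csub, LinearMap.mem_ker, LinearMap.flip_apply, adB_apply, sub_eq_zero]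

/-! ### measure lemmas on the subspace `V(G)` -/

theorem isometry_Vsub_subtype : Isometry ((Vsub G).subtype) :=
  AddMonoidHomClass.isometry_of_norm _ fun x => rfl

theorem haar_on_Vsub : (μH[(dG G : ℝ)] : Measure ↥(Vsub G)).IsAddHaarMeasure :=
  isAddHaarMeasure_hausdorffMeasure

theorem null_inter_proper (p : Submodule ℝ (Matrix (Fin n) (Fin n) ℝ)) (hp : ¬ Vsub G ≤ p) :
    μH[(dG G : ℝ)] (↑(p ⊓ Vsub G) : Set (Matrix (Fin n) (Fin n) ℝ)) = 0 := by
  haveI := haar_on_Vsub G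
  set q : Submodule ℝ ↥(Vsub G) := Submodule.comap (Vsub G).subtype p with hq
  have hqn : q ≠ ⊤ := fun h => hp (Submodule.comap_subtype_eq_top.1 h)
  have him : ((Vsub G).subtype) '' (q : Set ↥(Vsub G))
      = ↑(p ⊓ Vsub G) := by
    ext x
    constructor
    · rintro ⟨y, hy, rfl⟩
      exact Submodule.mem_inf.2 ⟨hy, y.2⟩
    · intro hx
      obtain ⟨hxp, hxV⟩ := Submodule.mem_inf.1 hx
      exact ⟨⟨x, hxV⟩, hxp, rfl⟩
  rw [← him, (isometry_Vsub_subtype G).hausdorffMeasure_image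
    (Or.inl (by positivity)) (q : Set ↥(Vsub G))]
  exact @Measure.addHaar_submodule _ _ _ _ _ _ _ this q hqn

theorem Vset_not_null : μH[(dG G : ℝ)] (Vset G) ≠ 0 := by
  haveI := haar_on_Vsub G
  have him : ((Vsub G).subtype) '' Set.univ = Vset G := by
    rw [Set.image_univ]
    ext x
    constructor
    · rintro ⟨y, rfl⟩; exact y.2
    · intro hx; exact ⟨⟨x, hx⟩, rfl⟩
  rw [← him, (isometry_Vsub_subtype G).hausdorffMeasure_image (Or.inl (by positivity)) _]
  exact isOpen_univ.measure_ne_zero _ ⟨0, trivial⟩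

end Stmt13Aux

attribute [local instance] Matrix.frobeniusNormedSpace

/-- for any symmetry group `G`, exactly one of the following holds:
affine exactness holds μ_G-almost everywhere on 𝒜(G), or it fails for every A ∈ 𝒜(G). -/
theorem stmt13 {n : ℕ} (G : Subgroup (Equiv.Perm (Fin n)))
    (hsym : (AcalA G).Nonempty) :
    Xor' (muG G {A | A ∈ AcalA G ∧ ¬ AffineExact A} = 0)
      (∀ A ∈ AcalA G, ¬ AffineExact A) := by
  classical
  by_cases hex : ∃ A₀ ∈ AcalA G, AffineExact A₀
  · -- Case 1: some A₀ is exact; then the failure set is μ_G-null.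
    obtain ⟨A₀, hA₀, hA₀e⟩ := hex
    refine Or.inl ⟨?_, fun hall => hall A₀ hA₀ hA₀e⟩
    have hK₀ : Ksub G A₀ = vectorSpan ℝ (matSet G) := (exact_iff G hA₀).1 hA₀e
    have hA₀V : A₀ ∈ Vset G := AcalA_subset_Vset G hA₀
    have hD0W : vectorSpan ℝ (matSet G) ≤ Wsub G :=
      (D0_le_Ksub G hA₀V).trans inf_le_left
    -- a complement U of D0 inside W
    obtain ⟨C', hC'⟩ :=
      Submodule.exists_isCompl (Submodule.comap (Wsub G).subtype (vectorSpan ℝ (matSet G)))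
    set U : Submodule ℝ (Matrix (Fin n) (Fin n) ℝ) := Submodule.map (Wsub G).subtype C' with hUdef
    have hUW : U ≤ Wsub G := Submodule.map_subtype_le _ _
    have hmapD : Submodule.map (Wsub G).subtype
        (Submodule.comap (Wsub G).subtype (vectorSpan ℝ (matSet G))) = vectorSpan ℝ (matSet G) := by
      rw [Submodule.map_comap_subtype]
      exact inf_eq_right.2 hD0W
    have hsup : vectorSpan ℝ (matSet G) ⊔ U = Wsub G := by
      rw [hUdef, ← hmapD, ← Submodule.map_sup, hC'.sup_eq_top, Submodule.map_top,
        Submodule.range_subtype]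
    have hinf : vectorSpan ℝ (matSet G) ⊓ U = ⊥ := by
      rw [hUdef, ← hmapD, ← Submodule.map_inf _ (Submodule.injective_subtype _),
        hC'.inf_eq_bot, Submodule.map_bot]
    -- exactness criterion through U
    have hKiff : ∀ A ∈ AcalA G, Ksub G A ≠ vectorSpan ℝ (matSet G) →
        U ⊓ LinearMap.ker (adB A) ≠ ⊥ := by
      intro A hA hne h0
      apply hne
      apply le_antisymm ?_ (D0_le_Ksub G (AcalA_subset_Vset G hA))
      intro T hT
      have hTW : T ∈ Wsub G := (Submodule.mem_inf.1 hT).1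
      have hTk : T ∈ LinearMap.ker (adB A) := (Submodule.mem_inf.1 hT).2
      have hTsup : T ∈ vectorSpan ℝ (matSet G) ⊔ U := by rw [hsup]; exact hTW
      obtain ⟨dd, hdd, u, hu, rfl⟩ := Submodule.mem_sup.1 hTsup
      have hdk : dd ∈ LinearMap.ker (adB A) :=
        (Submodule.mem_inf.1 (D0_le_Ksub G (AcalA_subset_Vset G hA) hdd)).2
      have huk : u ∈ LinearMap.ker (adB A) := by
        have hsub := sub_mem hTk hdk
        simpa using hsub
      have hubot : u ∈ U ⊓ LinearMap.ker (adB A) := Submodule.mem_inf.2 ⟨hu, huk⟩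
      rw [h0, Submodule.mem_bot] at hubot
      rw [hubot, add_zero]
      exact hdd
    have hU0 : U ⊓ LinearMap.ker (adB A₀) = ⊥ := by
      rw [eq_bot_iff]
      intro T hT
      have h1 : T ∈ Ksub G A₀ :=
        Submodule.mem_inf.2 ⟨hUW (Submodule.mem_inf.1 hT).1, (Submodule.mem_inf.1 hT).2⟩
      rw [hK₀] at h1
      have h2 : T ∈ vectorSpan ℝ (matSet G) ⊓ U :=
        Submodule.mem_inf.2 ⟨h1, (Submodule.mem_inf.1 hT).1⟩
      rw [hinf] at h2
      exact h2
    -- determinant function detecting failure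
    set m := Module.finrank ℝ ↥U with hm
    set bU : Module.Basis (Fin m) ℝ ↥U := Module.finBasis ℝ ↥U with hbU
    set T₀ : ↥U →ₗ[ℝ] Matrix (Fin n) (Fin n) ℝ := (adB A₀) ∘ₗ U.subtype with hT₀
    have hT₀inj : Function.Injective T₀ := by
      rw [← LinearMap.ker_eq_bot, eq_bot_iff]
      intro t ht
      have h1 : (t : Matrix (Fin n) (Fin n) ℝ) ∈ U ⊓ LinearMap.ker (adB A₀) :=
        Submodule.mem_inf.2 ⟨t.2, ht⟩
      rw [hU0, Submodule.mem_bot] at h1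
      exact (Submodule.mem_bot ℝ).2 (Subtype.ext h1)
    obtain ⟨Rc, hRc⟩ := Submodule.exists_isCompl (LinearMap.range T₀)
    set π : Matrix (Fin n) (Fin n) ℝ →ₗ[ℝ] ↥(LinearMap.range T₀) :=
      (LinearMap.range T₀).linearProjOfIsCompl Rc hRc with hπ
    set eR : ↥U ≃ₗ[ℝ] ↥(LinearMap.range T₀) := LinearEquiv.ofInjective T₀ hT₀inj with heR
    set endo : Matrix (Fin n) (Fin n) ℝ → (↥U →ₗ[ℝ] ↥U) :=
      fun A => eR.symm.toLinearMap ∘ₗ π ∘ₗ adB A ∘ₗ U.subtype with hendo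
    set g : Matrix (Fin n) (Fin n) ℝ → ℝ := fun A => LinearMap.det (endo A) with hg
    have hgA₀ : g A₀ ≠ 0 := by
      have hid : endo A₀ = LinearMap.id := by
        refine LinearMap.ext fun t => ?_
        have h2 : π (T₀ t) = ⟨T₀ t, LinearMap.mem_range_self _ t⟩ := by
          have h3 := Submodule.linearProjOfIsCompl_apply_left hRc
            (⟨T₀ t, LinearMap.mem_range_self _ t⟩ : ↥(LinearMap.range T₀))
          exact h3
        have h3 : eR t = ⟨T₀ t, LinearMap.mem_range_self _ t⟩ :=
          Subtype.ext (by rw [heR]; exact LinearEquiv.ofInjective_apply T₀ t)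
        show eR.symm (π (adB A₀ (U.subtype t))) = t
        rw [show adB A₀ (U.subtype t) = T₀ t from rfl, h2, ← h3, LinearEquiv.symm_apply_apply]
      show LinearMap.det (endo A₀) ≠ 0
      rw [hid, LinearMap.det_id]
      exact one_ne_zero
    have hgfail : ∀ A ∈ AcalA G, ¬ AffineExact A → g A = 0 := by
      intro A hA hAe
      have hne : Ksub G A ≠ vectorSpan ℝ (matSet G) := fun h => hAe ((exact_iff G hA).2 h)
      obtain ⟨T, hT, hTne⟩ := (Submodule.ne_bot_iff _).1 (hKiff A hA hne)
      set t : ↥U := ⟨T, (Submodule.mem_inf.1 hT).1⟩ with htdef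
      have htne : t ≠ 0 := fun h => hTne (congrArg Subtype.val h)
      have hzero : endo A t = 0 := by
        show eR.symm (π (adB A (U.subtype t))) = 0
        have hk : adB A T = 0 := (Submodule.mem_inf.1 hT).2
        rw [show U.subtype t = T from rfl, hk, map_zero, map_zero]
      have hdet : Matrix.det (LinearMap.toMatrix bU bU (endo A)) = 0 := by
        rw [← Matrix.exists_mulVec_eq_zero_iff]
        refine ⟨bU.repr t, ?_, ?_⟩
        · intro h
          apply htne
          have h2 : bU.repr t = 0 := DFunLike.coe_injective h
          simpa using congrArg bU.repr.symm h2
        · rw [LinearMap.toMatrix_mulVec_repr, hzero, map_zero]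
          rfl
      show LinearMap.det (endo A) = 0
      rw [← LinearMap.det_toMatrix bU]
      exact hdet
    -- polynomial structure of g on V(G)
    set bV : Module.Basis (Fin (dG G)) ℝ ↥(Vsub G) := Module.finBasis ℝ ↥(Vsub G) with hbV
    set clm : (Fin (dG G) → ℝ) →ₗ[ℝ] Matrix (Fin n) (Fin n) ℝ :=
      (Vsub G).subtype ∘ₗ (bV.equivFun.symm : (Fin (dG G) → ℝ) ≃ₗ[ℝ] ↥(Vsub G)).toLinearMap
      with hclm
    set F : (Fin (dG G) → ℝ) → ℝ := fun x => g (clm x) with hF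
    have hFpoly : IsPolyFun F := by
      have hFeq : ∀ x, F x = Matrix.det (Matrix.of fun i j : Fin m =>
          ((bU.coord i) ∘ₗ eR.symm.toLinearMap ∘ₗ π ∘ₗ
            (adB.flip (U.subtype (bU j))) ∘ₗ clm) x) := by
        intro x
        show LinearMap.det (endo (clm x)) = _
        rw [← LinearMap.det_toMatrix bU]
        congr 1
        ext i j
        rw [LinearMap.toMatrix_apply]
        simp only [Matrix.of_apply, LinearMap.coe_comp, Function.comp_apply,
          LinearEquiv.coe_coe, Module.Basis.coord_apply, LinearMap.flip_apply]
        rfl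
      rw [show F = _ from funext hFeq]
      refine IsPolyFun.det _ fun i j => ?_
      simpa using IsPolyFun.linear
        ((bU.coord i) ∘ₗ eR.symm.toLinearMap ∘ₗ π ∘ₗ (adB.flip (U.subtype (bU j))) ∘ₗ clm)
    have hclmA : ∀ (A : Matrix (Fin n) (Fin n) ℝ) (hAV : A ∈ Vsub G),
        clm (bV.equivFun ⟨A, hAV⟩) = A := by
      intro A hAV
      show (Vsub G).subtype (bV.equivFun.symm (bV.equivFun ⟨A, hAV⟩)) = A
      rw [LinearEquiv.symm_apply_apply]
      rfl
    have hZvol : volume {x | F x = 0} = 0 := by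
      refine hFpoly.volume_zero (x₀ := bV.equivFun ⟨A₀, hA₀V⟩) ?_
      show g (clm (bV.equivFun ⟨A₀, hA₀V⟩)) ≠ 0
      rw [hclmA A₀ hA₀V]
      exact hgA₀
    have hμZ : μH[(dG G : ℝ)] {x | F x = 0} = 0 := by
      have hpi : (μH[(dG G : ℝ)] : Measure (Fin (dG G) → ℝ)) = volume := by
        have h := hausdorffMeasure_pi_real (ι := Fin (dG G))
        simpa [Fintype.card_fin] using h
      rw [hpi]
      exact hZvol
    set clmC := LinearMap.toContinuousLinearMap clm with hclmC
    have himage : μH[(dG G : ℝ)] (clmC '' {x | F x = 0}) = 0 := by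
      have hb := clmC.lipschitz.hausdorffMeasure_image_le
        (by positivity : (0:ℝ) ≤ (dG G : ℝ)) {x | F x = 0}
      rw [hμZ, mul_zero] at hb
      exact le_antisymm hb zero_le
    rw [muG_apply]
    refine measure_mono_null ?_ himage
    rintro A ⟨⟨hA, hAe⟩, hAV⟩
    refine ⟨bV.equivFun ⟨A, hAV⟩, ?_, ?_⟩
    · show g (clm (bV.equivFun ⟨A, hAV⟩)) = 0
      rw [hclmA A hAV]
      exact hgfail A hA hAe
    · show clmC (bV.equivFun ⟨A, hAV⟩) = A
      rw [hclmC]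
      rw [show (LinearMap.toContinuousLinearMap clm) (bV.equivFun ⟨A, hAV⟩)
        = clm (bV.equivFun ⟨A, hAV⟩) from rfl]
      exact hclmA A hAV
  · -- Case 2: no A is exact.
    have hall : ∀ A ∈ AcalA G, ¬ AffineExact A := fun A hA hAe => hex ⟨A, hA, hAe⟩
    refine Or.inr ⟨hall, ?_⟩
    intro h0
    have hseteq : {A | A ∈ AcalA G ∧ ¬ AffineExact A} = AcalA G := by
      ext A
      simp only [Set.mem_setOf_eq]
      exact ⟨fun h => h.1, fun h => ⟨h, hall A h⟩⟩
    rw [muG_apply, hseteq, Set.inter_eq_left.2 (AcalA_subset_Vset G)] at h0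
    have hcompl : Vset G \ AcalA G ⊆
        ⋃ σ : {σ : Equiv.Perm (Fin n) // σ ∉ G},
          (↑(Csub σ.1 ⊓ Vsub G) : Set (Matrix (Fin n) (Fin n) ℝ)) := by
      rintro A ⟨hAV, hAn⟩
      have hsub := matSet_subset_Aut G hAV
      have hne : Aut A ≠ matSet G := fun h => hAn ⟨hAV.1, h⟩
      have hnsub : ¬ Aut A ⊆ matSet G := fun h => hne (Set.Subset.antisymm h hsub)
      obtain ⟨P, hPA, hPn⟩ := Set.not_subset.1 hnsub
      obtain ⟨σ, rfl⟩ := hPA.1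
      have hσ : σ ∉ G := fun h => hPn ⟨σ, h, rfl⟩
      refine Set.mem_iUnion.2 ⟨⟨σ, hσ⟩, ?_⟩
      exact Submodule.mem_inf.2 ⟨mem_Csub.2 hPA.2, hAV⟩
    have hnull : μH[(dG G : ℝ)] (Vset G \ AcalA G) = 0 := by
      refine measure_mono_null hcompl (measure_iUnion_null fun σ => ?_)
      refine null_inter_proper G (Csub σ.1) ?_
      intro hle
      obtain ⟨A₁, hA₁⟩ := hsym
      have hA₁V : A₁ ∈ Vsub G := AcalA_subset_Vset G hA₁
      have hc : A₁ * pm n σ.1 = pm n σ.1 * A₁ := mem_Csub.1 (hle hA₁V)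
      have hmem : pm n σ.1 ∈ Aut A₁ := ⟨⟨σ.1, rfl⟩, hc⟩
      rw [hA₁.2] at hmem
      exact σ.2 ((pm_mem_matSet_iff G).1 hmem)
    have hV : μH[(dG G : ℝ)] (Vset G) = 0 := by
      have hle : μH[(dG G : ℝ)] (Vset G) ≤
          μH[(dG G : ℝ)] (AcalA G ∪ (Vset G \ AcalA G)) := by
        refine measure_mono fun x hx => ?_
        by_cases h : x ∈ AcalA G
        · exact Or.inl h
        · exact Or.inr ⟨hx, h⟩
      have hle2 := (measure_union_le (μ := μH[(dG G : ℝ)]) (AcalA G) (Vset G \ AcalA G))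
      rw [h0, hnull, add_zero] at hle2
      exact le_antisymm (hle.trans hle2) zero_le
    exact Vset_not_null G hV
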